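/- Let A ∈ ℝ^{n×n} be symmetric positive semidefinite and S ⊆ [n], and let A° := A − A_{:,S}(A_{S,S})† A_{S,:} be the Nyström residual. Then the smallest nonzero eigenvalue of A° is at least the smallest nonzero eigenvalue of A: λmin⁺(A°) ≥ λmin⁺(A). -/

import Mathlib

open Matrix

/-- `Mp` is the Moore–Penrose pseudoinverse of `M` (the four Penrose conditions,
which characterize it uniquely). -/
def IsMoorePenrose {k l : Type*} [Fintype k] [Fintype l]
    (M : Matrix k l ℝ) (Mp : Matrix l k ℝ) : Prop :=
  M * Mp * M = M ∧ Mp * M * Mp = Mp ∧ (M * Mp)ᵀ = M * Mp ∧ (Mp * M)ᵀ = Mp * M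

/-- `μ` is an eigenvalue of the square matrix `M`. -/
def IsEigenvalue {n : ℕ} (M : Matrix (Fin n) (Fin n) ℝ) (μ : ℝ) : Prop :=
  ∃ v : Fin n → ℝ, v ≠ 0 ∧ M *ᵥ v = μ • v

lemma mp_unique {k : Type*} [Fintype k] (M P Q : Matrix k k ℝ)
    (hP : IsMoorePenrose M P) (hQ : IsMoorePenrose M Q) : P = Q := by
  obtain ⟨hP1, hP2, hP3, hP4⟩ := hP
  obtain ⟨hQ1, hQ2, hQ3, hQ4⟩ := hQ
  have hMP : M * P = M * Q := by
    calc M * P = (M * P)ᵀ := hP3.symm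
    _ = ((M * Q * M) * P)ᵀ := by rw [hQ1]
    _ = ((M * Q) * (M * P))ᵀ := by simp only [mul_assoc]
    _ = (M * P)ᵀ * (M * Q)ᵀ := transpose_mul _ _
    _ = (M * P) * (M * Q) := by rw [hP3, hQ3]
    _ = (M * P * M) * Q := by simp only [mul_assoc]
    _ = M * Q := by rw [hP1]
  have hPM : P * M = Q * M := by
    calc P * M = (P * M)ᵀ := hP4.symm
    _ = (P * (M * Q * M))ᵀ := by rw [hQ1]
    _ = ((P * M) * (Q * M))ᵀ := by simp only [mul_assoc]
    _ = (Q * M)ᵀ * (P * M)ᵀ := transpose_mul _ _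
    _ = (Q * M) * (P * M) := by rw [hP4, hQ4]
    _ = Q * (M * P * M) := by simp only [mul_assoc]
    _ = Q * M := by rw [hP1]
  calc P = P * M * P := hP2.symm
  _ = Q * M * P := by rw [hPM]
  _ = Q * (M * P) := by rw [mul_assoc]
  _ = Q * (M * Q) := by rw [hMP]
  _ = Q * M * Q := by rw [mul_assoc]
  _ = Q := hQ2

lemma aux_pinv {n : ℕ} {A : Matrix (Fin n) (Fin n) ℝ} (hA : A.PosSemidef)
    (lam : ℝ) (hmin : ∀ μ : ℝ, μ ≠ 0 → IsEigenvalue A μ → lam ≤ μ) :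
    ∃ G : Matrix (Fin n) (Fin n) ℝ, G.PosSemidef ∧ A * G * A = A ∧
      ((1 : Matrix (Fin n) (Fin n) ℝ) - lam • G).PosSemidef := by
  classical
  have hH : A.IsHermitian := hA.1
  set V : Matrix (Fin n) (Fin n) ℝ := (hH.eigenvectorUnitary : Matrix (Fin n) (Fin n) ℝ) with hV
  have hVsV : star V * V = 1 := Matrix.mem_unitaryGroup_iff'.mp hH.eigenvectorUnitary.2
  have hVVs : V * star V = 1 := Matrix.mem_unitaryGroup_iff.mp hH.eigenvectorUnitary.2
  set d : Fin n → ℝ := hH.eigenvalues with hd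
  have hofReal : (RCLike.ofReal ∘ d : Fin n → ℝ) = d := funext fun i => rfl
  have hspec : A = V * diagonal d * star V := by
    have h := hH.spectral_theorem
    rw [hofReal] at h
    exact h
  set g : Fin n → ℝ := fun i => if d i = 0 then 0 else (d i)⁻¹ with hg
  have hd0 : ∀ i, 0 ≤ d i := fun i => hA.eigenvalues_nonneg i
  have hg0 : ∀ i, 0 ≤ g i := by
    intro i
    by_cases h : d i = 0 <;> simp [hg, h, inv_nonneg.mpr (hd0 i)]
  refine ⟨V * diagonal g * star V, ?_, ?_, ?_⟩
  · exact (posSemidef_diagonal_iff.mpr hg0).mul_mul_conjTranspose_same V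
  · calc A * (V * diagonal g * star V) * A
        = V * diagonal d * star V * (V * diagonal g * star V) * (V * diagonal d * star V) := by
          rw [← hspec]
    _ = V * (diagonal d * (star V * V) * diagonal g * (star V * V) * diagonal d) * star V := by
          simp only [mul_assoc]
    _ = V * diagonal d * star V := by
          rw [hVsV]
          simp only [mul_one, diagonal_mul_diagonal]
          have hfun : (fun i => d i * g i * d i) = d := by
            funext i
            by_cases h : d i = 0
            · simp [h]
            · have hgi : g i = (d i)⁻¹ := if_neg h
              rw [hgi]
              field_simp
          rw [hfun]
    _ = A := hspec.symm
  · have key : (1 : Matrix (Fin n) (Fin n) ℝ) - lam • (V * diagonal g * star V)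
        = V * diagonal (fun i => 1 - lam * g i) * star V := by
      have h1 : diagonal (fun i => 1 - lam * g i)
          = (1 : Matrix (Fin n) (Fin n) ℝ) - lam • diagonal g := by
        rw [← diagonal_one, ← diagonal_smul, ← diagonal_sub]
        rfl
      rw [h1, mul_sub, sub_mul, mul_one, hVVs]
      rw [Matrix.mul_smul, Matrix.smul_mul]
    rw [key]
    refine (posSemidef_diagonal_iff.mpr ?_).mul_mul_conjTranspose_same V
    intro i
    by_cases h : d i = 0
    · simp [hg, h]
    · have hdi : 0 < d i := lt_of_le_of_ne (hd0 i) (Ne.symm h)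
      have heig : IsEigenvalue A (d i) :=
        ⟨hH.eigenvectorBasis i, (WithLp.ofLp_eq_zero (p := 2)).not.mpr (hH.eigenvectorBasis.orthonormal.ne_zero i),
          hH.mulVec_eigenvectorBasis i⟩
      have hle : lam ≤ d i := hmin (d i) h heig
      simp only [hg, h, if_false]
      rw [sub_nonneg, ← div_eq_mul_inv, div_le_one hdi]
      exact hle

lemma mulE_aux {m : Type*} [Fintype m] {n : ℕ} {s : Type*} [Fintype s] (inc : s → Fin n)
    (X : Matrix m (Fin n) ℝ) :
    X * (1 : Matrix (Fin n) (Fin n) ℝ).submatrix id inc = X.submatrix id inc := by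
  ext i j
  simp [Matrix.mul_apply, Matrix.one_apply]

lemma Fmul_aux {m : Type*} [Fintype m] {n : ℕ} {s : Type*} [Fintype s] (inc : s → Fin n)
    (X : Matrix (Fin n) m ℝ) :
    (1 : Matrix (Fin n) (Fin n) ℝ).submatrix inc id * X = X.submatrix inc id := by
  ext i j
  simp [Matrix.mul_apply, Matrix.one_apply]


/-- the Nyström residual has no smaller nonzero spectrum bottom.
For psd `A` and the Nyström residual `A° = A − A_{:,S}(A_{S,S})†A_{S,:}`, the smallest
nonzero eigenvalue of `A°` is at least the smallest nonzero eigenvalue of `A`. -/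
theorem stmt_15 {n : ℕ}
    (A : Matrix (Fin n) (Fin n) ℝ) (hA : A.PosSemidef)
    (S : Finset (Fin n))
    -- `W = (A_{S,S})†`
    (W : Matrix {j // j ∈ S} {j // j ∈ S} ℝ)
    (hW : IsMoorePenrose (A.submatrix (fun j : {j // j ∈ S} => (j : Fin n))
      (fun j : {j // j ∈ S} => (j : Fin n))) W)
    -- the Nyström residual `A°`
    (Ao : Matrix (Fin n) (Fin n) ℝ)
    (hAo : Ao = A - A.submatrix id (fun j : {j // j ∈ S} => (j : Fin n)) * W *
      A.submatrix (fun j : {j // j ∈ S} => (j : Fin n)) id)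
    -- `lamA = λmin⁺(A)`: the smallest nonzero eigenvalue of `A`
    (lamA : ℝ) (hlamA_ne : lamA ≠ 0) (hlamA_eig : IsEigenvalue A lamA)
    (hlamA_min : ∀ μ : ℝ, μ ≠ 0 → IsEigenvalue A μ → lamA ≤ μ)
    -- `lamAo = λmin⁺(A°)`: the smallest nonzero eigenvalue of `A°`
    (lamAo : ℝ) (hlamAo_ne : lamAo ≠ 0) (hlamAo_eig : IsEigenvalue Ao lamAo)
    (hlamAo_min : ∀ μ : ℝ, μ ≠ 0 → IsEigenvalue Ao μ → lamAo ≤ μ) :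
    lamA ≤ lamAo := by
  classical
  obtain ⟨G, hGpsd, hAGA, hIm⟩ := aux_pinv hA lamA hlamA_min
  set inc : {j // j ∈ S} → Fin n := fun j => (j : Fin n) with hinc
  set E : Matrix (Fin n) {j // j ∈ S} ℝ :=
    (1 : Matrix (Fin n) (Fin n) ℝ).submatrix id inc with hE
  set F : Matrix {j // j ∈ S} (Fin n) ℝ :=
    (1 : Matrix (Fin n) (Fin n) ℝ).submatrix inc id with hF
  have hAt : Aᵀ = A := by
    ext i j
    have := congrFun (congrFun hA.1 i) j
    simpa using this
  have hCE : A.submatrix id inc = A * E := (mulE_aux inc A).symm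
  have hFA : A.submatrix inc id = F * A := (Fmul_aux inc A).symm
  have hMeq : A.submatrix inc inc = F * A * E := by
    calc A.submatrix inc inc = (A.submatrix inc id).submatrix id inc := by
          rw [submatrix_submatrix]
          rfl
    _ = (F * A).submatrix id inc := by rw [hFA]
    _ = (F * A) * E := (mulE_aux inc (F * A)).symm
  -- W is symmetric
  have hMsym : (A.submatrix inc inc)ᵀ = A.submatrix inc inc := by
    rw [transpose_submatrix, hAt]
  set M : Matrix {j // j ∈ S} {j // j ∈ S} ℝ := A.submatrix inc inc with hM
  obtain ⟨hW1, hW2, hW3, hW4⟩ := hW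
  have hWt : IsMoorePenrose M Wᵀ := by
    refine ⟨?_, ?_, ?_, ?_⟩
    · have h := congrArg Matrix.transpose hW1
      simp only [transpose_mul, hMsym, ← hM, ← mul_assoc] at h
      rw [hM] at h ⊢
      simpa [hMsym, ← mul_assoc] using h
    · have h := congrArg Matrix.transpose hW2
      simpa [transpose_mul, hMsym, ← mul_assoc] using h
    · have h3 : M * Wᵀ = W * M := by
        calc M * Wᵀ = (W * Mᵀ)ᵀ := by rw [transpose_mul, transpose_transpose]
        _ = (W * M)ᵀ := by rw [hM, hMsym]
        _ = W * M := hW4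
      rw [h3, hW4]
    · have h4 : Wᵀ * M = M * W := by
        calc Wᵀ * M = (Mᵀ * W)ᵀ := by rw [transpose_mul, transpose_transpose]
        _ = (M * W)ᵀ := by rw [hM, hMsym]
        _ = M * W := hW3
      rw [h4, hW3]
  have hWsym : Wᵀ = W :=
    (mp_unique M W Wᵀ ⟨hW1, hW2, hW3, hW4⟩ hWt).symm
  -- the Nyström correction B
  set B : Matrix (Fin n) (Fin n) ℝ :=
    A.submatrix id inc * W * A.submatrix inc id with hBdef
  have hB : B = (A * E) * W * (F * A) := by rw [hBdef, hCE, hFA]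
  have hWMW : W * (F * A * E) * W = W := by rw [← hMeq]; exact hW2
  have hAGB : A * G * B = B := by
    rw [hB]
    calc A * G * ((A * E) * W * (F * A)) = (A * G * A) * (E * W * (F * A)) := by
          simp only [Matrix.mul_assoc]
    _ = A * (E * W * (F * A)) := by rw [hAGA]
    _ = (A * E) * W * (F * A) := by simp only [Matrix.mul_assoc]
  have hBGA : B * G * A = B := by
    rw [hB]
    calc (A * E) * W * (F * A) * G * A = (A * E) * W * (F * (A * G * A)) := by
          simp only [Matrix.mul_assoc]
    _ = (A * E) * W * (F * A) := by rw [hAGA]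
  have hBGB : B * G * B = B := by
    rw [hB]
    calc (A * E) * W * (F * A) * G * ((A * E) * W * (F * A))
        = (A * E) * W * (F * (A * G * A) * E) * W * (F * A) := by simp only [Matrix.mul_assoc]
    _ = (A * E) * W * (F * A * E) * W * (F * A) := by rw [hAGA]
    _ = (A * E) * (W * (F * A * E) * W) * (F * A) := by simp only [Matrix.mul_assoc]
    _ = (A * E) * W * (F * A) := by rw [hWMW]
  have hAoeq : Ao = A - B := hAo
  have hAoG : Ao * G * Ao = Ao := by
    rw [hAoeq]
    calc (A - B) * G * (A - B)
        = A * G * A - B * G * A - (A * G * B - B * G * B) := by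
          simp only [sub_mul, mul_sub]
    _ = A - B - (B - B) := by rw [hAGA, hAGB, hBGA, hBGB]
    _ = A - B := by abel
  -- symmetry of Ao
  have hAosym : Aoᵀ = Ao := by
    rw [hAoeq, transpose_sub, hAt, hBdef, transpose_mul, transpose_mul,
      transpose_submatrix, transpose_submatrix, hAt, hWsym]
    simp only [Matrix.mul_assoc]
  -- eigenvector analysis
  obtain ⟨v, hv0, hvec⟩ := hlamAo_eig
  have h1 : lamAo • (Ao *ᵥ (G *ᵥ v)) = lamAo • v := by
    have h := congrArg (fun X : Matrix (Fin n) (Fin n) ℝ => X *ᵥ v) hAoG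
    simp only [← Matrix.mulVec_mulVec] at h
    rw [hvec, Matrix.mulVec_smul, Matrix.mulVec_smul] at h
    exact h
  have hu : Ao *ᵥ (G *ᵥ v) = v := smul_right_injective _ hlamAo_ne h1
  set u : Fin n → ℝ := G *ᵥ v with hudef
  have hq1 : v ⬝ᵥ v = lamAo * (v ⬝ᵥ u) := by
    calc v ⬝ᵥ v = v ⬝ᵥ (Ao *ᵥ u) := by rw [hu]
    _ = (v ᵥ* Ao) ⬝ᵥ u := dotProduct_mulVec v Ao u
    _ = (Aoᵀ *ᵥ v) ⬝ᵥ u := by rw [mulVec_transpose]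
    _ = (lamAo • v) ⬝ᵥ u := by rw [hAosym, hvec]
    _ = lamAo * (v ⬝ᵥ u) := by rw [smul_dotProduct]; rfl
  have hq2 : 0 ≤ v ⬝ᵥ u := by
    have := hGpsd.dotProduct_mulVec_nonneg v
    simpa [hudef] using this
  have hvv_pos : 0 < v ⬝ᵥ v := by
    rcases lt_or_eq_of_le (Finset.sum_nonneg fun i _ => mul_self_nonneg (v i)) with h | h
    · exact h
    · exact absurd (dotProduct_self_eq_zero.mp h.symm) hv0
  have huv_pos : 0 < v ⬝ᵥ u := by
    rcases lt_or_eq_of_le hq2 with h | h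
    · exact h
    · rw [hq1, ← h, mul_zero] at hvv_pos; exact absurd hvv_pos (lt_irrefl 0)
  have hineq : lamA * (v ⬝ᵥ u) ≤ v ⬝ᵥ v := by
    have h := hIm.dotProduct_mulVec_nonneg v
    simp only [star_trivial, Matrix.sub_mulVec, Matrix.one_mulVec,
      Matrix.smul_mulVec, dotProduct_sub, dotProduct_smul, smul_eq_mul] at h
    rw [← hudef] at h
    linarith
  rw [hq1] at hineq
  exact le_of_mul_le_mul_right (by linarith) huv_pos
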